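/- Let m, n ≥ 1 and let 𝒢 be an m×m matrix whose entries are polynomials in n variables with complex coefficients, and let d be the maximum of the total degrees of the entries of 𝒢. Suppose there exists C > 0 such that max{|Re λ| : λ ∈ σ(𝒢(iζ))} ≤ C(1 + |Im ζ|) for all ζ ∈ ℂⁿ. Then for every k ∈ ℕ there exists D_k > 0 such that for all t ∈ ℝ and ζ ∈ ℂⁿ, ‖𝒢(iζ)^k · exp(t𝒢(iζ))‖ ≤ e^{C|t|} (1 + 2|t|)^{m−1} D_k (1+|ζ|)^{(m+k−1)d} e^{C|t|·|Im ζ|}. -/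

import Mathlib

open scoped Matrix.Norms.L2Operator

set_option maxHeartbeats 1000000

noncomputable def putzerR (μ : ℕ → ℂ) : ℕ → ℝ → ℂ
  | 0 => fun t => Complex.exp (μ 0 * t)
  | (j+1) => fun t =>
      Complex.exp (μ (j+1) * t) *
        ∫ s in (0:ℝ)..t, Complex.exp (-(μ (j+1)) * s) * putzerR μ j s

lemma hasDerivAt_cexp_real (c : ℂ) (t : ℝ) :
    HasDerivAt (fun s : ℝ => Complex.exp (c * s)) (c * Complex.exp (c * t)) t := by
  have h : HasDerivAt (fun z : ℂ => Complex.exp (c * z)) (c * Complex.exp (c * t)) (t : ℂ) := by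
    simpa [mul_comm, Function.comp_def] using
      (Complex.hasDerivAt_exp (c * t)).comp (t : ℂ) ((hasDerivAt_id (t : ℂ)).const_mul c)
  exact h.comp_ofReal

lemma putzerR_deriv (μ : ℕ → ℂ) (j : ℕ) :
    Continuous (putzerR μ j) ∧
      ∀ t, HasDerivAt (putzerR μ j)
        (μ j * putzerR μ j t + if j = 0 then 0 else putzerR μ (j-1) t) t := by
  induction j with
  | zero =>
    refine ⟨?_, fun t => by simpa [putzerR] using hasDerivAt_cexp_real (μ 0) t⟩
    exact Complex.continuous_exp.comp (continuous_const.mul Complex.continuous_ofReal)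
  | succ j ih =>
    obtain ⟨hc, -⟩ := ih
    have hcont : Continuous fun s : ℝ => Complex.exp (-μ (j+1) * s) * putzerR μ j s :=
      (Complex.continuous_exp.comp (continuous_const.mul Complex.continuous_ofReal)).mul hc
    have hd : ∀ t, HasDerivAt (putzerR μ (j+1))
        (μ (j+1) * putzerR μ (j+1) t + putzerR μ j t) t := by
      intro t
      have hint := (hcont.integral_hasStrictDerivAt 0 t).hasDerivAt
      have := (hasDerivAt_cexp_real (μ (j+1)) t).mul hint
      have hexp : Complex.exp (μ (j+1) * t) * Complex.exp (-μ (j+1) * t) = 1 := by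
        rw [← Complex.exp_add]
        ring_nf
        exact Complex.exp_zero
      refine this.congr_deriv (Eq.symm ?_)
      show μ (j+1) * putzerR μ (j+1) t + putzerR μ j t = _
      simp only [putzerR]
      rw [← mul_assoc (Complex.exp (μ (j+1) * t)) (Complex.exp (-μ (j+1) * t)), hexp, one_mul,
        mul_assoc]
    refine ⟨continuous_iff_continuousAt.mpr fun t => (hd t).continuousAt, fun t => ?_⟩
    simpa using hd t

lemma abs_sub_of_uIoc {t s : ℝ} (hs : s ∈ Set.uIoc 0 t) : |t - s| = |t| - |s| ∧ |s| ≤ |t| := by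
  rcases le_total 0 t with ht | ht
  · rw [Set.uIoc_of_le ht] at hs
    obtain ⟨h1, h2⟩ := hs
    rw [abs_of_nonneg (by linarith), abs_of_nonneg (by linarith : (0:ℝ) ≤ s),
      abs_of_nonneg ht]
    constructor <;> linarith
  · rw [Set.uIoc_of_ge ht] at hs
    obtain ⟨h1, h2⟩ := hs
    rw [abs_of_nonpos (by linarith), abs_of_nonpos (by linarith : s ≤ 0),
      abs_of_nonpos ht]
    constructor <;> linarith

lemma putzerR_bound (μ : ℕ → ℂ) (R : ℝ) (hR : 0 ≤ R) :
    ∀ j, (∀ i, i ≤ j → |(μ i).re| ≤ R) → ∀ t : ℝ,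
      ‖putzerR μ j t‖ ≤ Real.exp (R * |t|) * |t| ^ j := by
  intro j
  induction j with
  | zero =>
    intro h t
    simp only [putzerR, pow_zero, mul_one, Complex.norm_exp]
    apply Real.exp_le_exp.mpr
    have : (μ 0 * (t:ℂ)).re = (μ 0).re * t := by simp [Complex.mul_re]
    rw [this]
    calc (μ 0).re * t ≤ |(μ 0).re * t| := le_abs_self _
      _ = |(μ 0).re| * |t| := abs_mul _ _
      _ ≤ R * |t| := by gcongr; exact h 0 le_rfl
  | succ j ih =>
    intro h t
    have hμ : |(μ (j+1)).re| ≤ R := h (j+1) le_rfl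
    have hb := ih (fun i hi => h i (hi.trans (Nat.le_succ j)))
    simp only [putzerR, norm_mul, Complex.norm_exp]
    have hre : (μ (j+1) * (t:ℂ)).re = (μ (j+1)).re * t := by simp [Complex.mul_re]
    rw [hre]
    set a := (μ (j+1)).re with ha
    have key : ‖∫ s in (0:ℝ)..t, Complex.exp (-μ (j+1) * s) * putzerR μ j s‖ ≤
        (Real.exp (-(a * t)) * (Real.exp (R * |t|) * |t| ^ j)) * |t - 0| := by
      apply intervalIntegral.norm_integral_le_of_norm_le_const
      intro s hs
      obtain ⟨hts, hst⟩ := abs_sub_of_uIoc hs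
      rw [norm_mul, Complex.norm_exp]
      have hre2 : (-μ (j+1) * (s:ℂ)).re = -(a * s) := by simp [Complex.mul_re, ha]
      rw [hre2]
      have h1 : ‖putzerR μ j s‖ ≤ Real.exp (R * |s|) * |s| ^ j := hb s
      calc Real.exp (-(a * s)) * ‖putzerR μ j s‖
          ≤ Real.exp (-(a * s)) * (Real.exp (R * |s|) * |s| ^ j) := by gcongr
        _ = Real.exp (R * |s| - a * s) * |s| ^ j := by
            rw [show R * |s| - a * s = -(a * s) + R * |s| from by ring, Real.exp_add, mul_assoc]
        _ ≤ Real.exp (R * |t| - a * t) * |t| ^ j := by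
            refine mul_le_mul (Real.exp_le_exp.mpr ?_) (pow_le_pow_left₀ (abs_nonneg s) hst j)
              (pow_nonneg (abs_nonneg s) j) (Real.exp_pos _).le
            have : a * (t - s) ≤ R * (|t| - |s|) := by
              calc a * (t - s) ≤ |a * (t - s)| := le_abs_self _
                _ = |a| * |t - s| := abs_mul _ _
                _ ≤ R * |t - s| := by gcongr
                _ = R * (|t| - |s|) := by rw [hts]
            nlinarith
        _ = Real.exp (-(a * t)) * (Real.exp (R * |t|) * |t| ^ j) := by
            rw [show R * |t| - a * t = -(a * t) + R * |t| from by ring, Real.exp_add, mul_assoc]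
    have h12 : Real.exp (a * t) * Real.exp (-(a * t)) = 1 := by
      rw [← Real.exp_add]
      simp
    calc Real.exp (a * t) *
          ‖∫ s in (0:ℝ)..t, Complex.exp (-μ (j+1) * s) * putzerR μ j s‖
        ≤ Real.exp (a * t) *
            ((Real.exp (-(a * t)) * (Real.exp (R * |t|) * |t| ^ j)) * |t - 0|) := by
          gcongr
      _ = Real.exp (R * |t|) * |t| ^ (j+1) := by
          rw [sub_zero, pow_succ]
          linear_combination (Real.exp (R * |t|) * |t| ^ j * |t|) * h12

noncomputable def putzerP {m : ℕ} (A : Matrix (Fin m) (Fin m) ℂ) (μ : ℕ → ℂ) :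
    ℕ → Matrix (Fin m) (Fin m) ℂ
  | 0 => 1
  | (j+1) => putzerP A μ j * (A - μ j • 1)

lemma putzerP_commute {m : ℕ} (A : Matrix (Fin m) (Fin m) ℂ) (μ : ℕ → ℂ) (j : ℕ) :
    Commute A (putzerP A μ j) := by
  induction j with
  | zero => exact Commute.one_right A
  | succ j ih =>
    exact ih.mul_right (Commute.sub_right (Commute.refl A) ((Commute.one_right A).smul_right _))

lemma putzer_exp_eq {m : ℕ} (hm : 1 ≤ m) (A : Matrix (Fin m) (Fin m) ℂ) (μ : ℕ → ℂ)
    (hP : putzerP A μ m = 0) (t : ℝ) :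
    NormedSpace.exp (t • A) = ∑ j ∈ Finset.range m, putzerR μ j t • putzerP A μ j := by
  set P := putzerP A μ with hPdef
  set Φ : ℝ → Matrix (Fin m) (Fin m) ℂ := fun t => ∑ j ∈ Finset.range m, putzerR μ j t • P j
    with hΦ
  have hAP : ∀ j, A * P j = P (j+1) + μ j • P j := by
    intro j
    have hcomm := putzerP_commute A μ j
    show A * P j = P j * (A - μ j • 1) + μ j • P j
    rw [Matrix.mul_sub, ← hcomm.eq]
    simp [Matrix.mul_smul, mul_smul_comm, hPdef]
  have hΦderiv : ∀ t, HasDerivAt Φ (A * Φ t) t := by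
    intro t
    have h1 : HasDerivAt Φ (∑ j ∈ Finset.range m,
        (μ j * putzerR μ j t + if j = 0 then 0 else putzerR μ (j-1) t) • P j) t := by
      apply HasDerivAt.fun_sum
      intro j _
      exact ((putzerR_deriv μ j).2 t).smul_const (P j)
    convert h1 using 1
    have expand : A * Φ t = ∑ j ∈ Finset.range m,
        (putzerR μ j t • P (j+1) + (μ j * putzerR μ j t) • P j) := by
      rw [hΦ, Finset.mul_sum]
      apply Finset.sum_congr rfl
      intro j _
      rw [Matrix.mul_smul, hAP j, smul_add, smul_smul, mul_comm (putzerR μ j t) (μ j)]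
    have split1 : ∑ j ∈ Finset.range m, putzerR μ j t • P (j+1)
        = ∑ j ∈ Finset.range (m-1), putzerR μ j t • P (j+1) := by
      obtain ⟨m', rfl⟩ : ∃ m', m = m' + 1 := ⟨m - 1, (Nat.succ_pred_eq_of_pos hm).symm⟩
      rw [Finset.sum_range_succ, hP, smul_zero, add_zero]
      simp
    have split2 : ∑ j ∈ Finset.range m, (if j = 0 then (0:ℂ) else putzerR μ (j-1) t) • P j
        = ∑ j ∈ Finset.range (m-1), putzerR μ j t • P (j+1) := by
      obtain ⟨m', rfl⟩ : ∃ m', m = m' + 1 := ⟨m - 1, (Nat.succ_pred_eq_of_pos hm).symm⟩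
      rw [Finset.sum_range_succ']
      simp
    rw [expand, Finset.sum_add_distrib, split1, ← split2]
    rw [← Finset.sum_add_distrib]
    apply Finset.sum_congr rfl
    intro j _
    rw [← add_smul, add_comm]
  -- uniqueness
  have hg : ∀ s : ℝ, HasDerivAt (fun u : ℝ => NormedSpace.exp ((-u) • A))
      (-(A * NormedSpace.exp ((-s) • A))) s := by
    intro s
    have hout : HasDerivAt (fun u : ℝ => NormedSpace.exp (u • A))
        (A * NormedSpace.exp ((-s) • A)) (-s) := by
      exact hasDerivAt_exp_smul_const' A (-s)
    have hneg : HasDerivAt (fun u : ℝ => -u) (-1 : ℝ) s := (hasDerivAt_id s).neg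
    have h2 := hout.scomp s hneg
    simpa [Function.comp_def] using h2
  set g : ℝ → Matrix (Fin m) (Fin m) ℂ := fun u => NormedSpace.exp ((-u) • A) * Φ u with hgdef
  have hgderiv : ∀ s, HasDerivAt g 0 s := by
    intro s
    have h := (hg s).mul (hΦderiv s)
    have hcomm : Commute (NormedSpace.exp ((-s) • A)) A :=
      (((Commute.refl A).smul_left (-s)).exp_left)
    refine h.congr_deriv ?_
    rw [← hcomm.eq]
    simp [mul_assoc]
  have hconst : ∀ s : ℝ, g s = g 0 := by
    intro s
    have hdiff : Differentiable ℝ g := fun u => (hgderiv u).differentiableAt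
    exact is_const_of_deriv_eq_zero hdiff (fun u => (hgderiv u).deriv) s 0
  have hΦ0 : Φ 0 = 1 := by
    have hΦ0' : Φ 0 = ∑ j ∈ Finset.range m, putzerR μ j 0 • P j := rfl
    rw [hΦ0']
    have hr0 : ∀ j, putzerR μ j 0 = if j = 0 then 1 else 0 := by
      intro j
      cases j with
      | zero => simp [putzerR]
      | succ j => simp [putzerR]
    rw [Finset.sum_eq_single 0]
    · simp [hr0, hPdef, putzerP]
    · intro j _ hj
      simp [hr0, hj]
    · intro h
      exact absurd (Finset.mem_range.mpr hm) h
  have hg0 : g 0 = 1 := by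
    rw [hgdef]
    simp [hΦ0]
  have hinv : NormedSpace.exp (t • A) * NormedSpace.exp ((-t) • A) = 1 := by
    rw [← Matrix.exp_add_of_commute]
    · rw [show t • A + (-t) • A = 0 by module]
      exact NormedSpace.exp_zero
    · exact ((Commute.refl A).smul_left t).smul_right (-t)
  have := hconst t
  rw [hg0] at this
  calc NormedSpace.exp (t • A) = NormedSpace.exp (t • A) * 1 := by rw [mul_one]
    _ = NormedSpace.exp (t • A) * (NormedSpace.exp ((-t) • A) * Φ t) := by rw [← this]
    _ = (NormedSpace.exp (t • A) * NormedSpace.exp ((-t) • A)) * Φ t := by rw [mul_assoc]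
    _ = Φ t := by rw [hinv, one_mul]

lemma root_charpoly_mem_spectrum {m : ℕ} (A : Matrix (Fin m) (Fin m) ℂ) (z : ℂ)
    (hz : A.charpoly.IsRoot z) : z ∈ spectrum ℂ A := by
  rw [spectrum.mem_iff]
  intro hunit
  rw [Matrix.isUnit_iff_isUnit_det] at hunit
  have hmap : (Matrix.charmatrix A).map (Polynomial.evalRingHom z)
      = algebraMap ℂ (Matrix (Fin m) (Fin m) ℂ) z - A := by
    ext i j
    by_cases h : i = j
    · subst h
      simp [Matrix.charmatrix_apply, Matrix.algebraMap_matrix_apply, Matrix.diagonal_apply_eq]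
    · simp [Matrix.charmatrix_apply, Matrix.algebraMap_matrix_apply, h,
        Matrix.diagonal_apply_ne _ h]
  have hdet : (algebraMap ℂ (Matrix (Fin m) (Fin m) ℂ) z - A).det = 0 := by
    rw [← hmap]
    rw [show A.charmatrix.map ⇑(Polynomial.evalRingHom z)
        = (Polynomial.evalRingHom z).mapMatrix A.charmatrix from rfl, ← RingHom.map_det]
    simpa [Polynomial.coe_evalRingHom, Matrix.charpoly] using hz
  rw [hdet] at hunit
  exact not_isUnit_zero hunit

lemma coord_abs_le_norm {n : ℕ} (x : EuclideanSpace ℂ (Fin n)) (j : Fin n) : ‖x j‖ ≤ ‖x‖ := by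
  rw [EuclideanSpace.norm_eq]
  rw [show ‖x j‖ = Real.sqrt (‖x j‖ ^ 2) from (Real.sqrt_sq (norm_nonneg _)).symm]
  exact Real.sqrt_le_sqrt (Finset.single_le_sum (fun i _ => sq_nonneg ‖x i‖) (Finset.mem_univ j))

lemma euclid_norm_le_sum {n : ℕ} (x : EuclideanSpace ℂ (Fin n)) : ‖x‖ ≤ ∑ i, ‖x i‖ := by
  rw [EuclideanSpace.norm_eq]
  rw [show (∑ i, ‖x i‖) = Real.sqrt ((∑ i, ‖x i‖) ^ 2) from
    (Real.sqrt_sq (Finset.sum_nonneg fun i _ => norm_nonneg _)).symm]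
  exact Real.sqrt_le_sqrt (Finset.sum_sq_le_sq_sum_of_nonneg fun i _ => norm_nonneg _)

lemma l2_opNorm_le_sum_abs {m : ℕ} (A : Matrix (Fin m) (Fin m) ℂ) :
    ‖A‖ ≤ ∑ p : Fin m × Fin m, ‖A p.1 p.2‖ := by
  rw [Matrix.cstar_norm_def]
  apply ContinuousLinearMap.opNorm_le_bound _
    (Finset.sum_nonneg fun p _ => norm_nonneg _)
  intro x
  set y := Matrix.toEuclideanCLM (𝕜 := ℂ) A x with hy
  have hyv : ∀ i, y i = A.mulVec x i := by
    intro i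
    rfl
  calc ‖y‖ ≤ ∑ i, ‖y i‖ := euclid_norm_le_sum y
    _ ≤ ∑ i, ∑ j, ‖A i j‖ * ‖x‖ := by
        apply Finset.sum_le_sum
        intro i _
        rw [hyv i]
        calc ‖A.mulVec x i‖ = ‖∑ j, A i j * x j‖ := rfl
          _ ≤ ∑ j, ‖A i j * x j‖ := by
              simpa using norm_sum_le (Finset.univ) (fun j => A i j * x j)
          _ ≤ ∑ j, ‖A i j‖ * ‖x‖ := by
              apply Finset.sum_le_sum
              intro j _
              rw [norm_mul]
              gcongr
              exact coord_abs_le_norm x j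
    _ = (∑ p : Fin m × Fin m, ‖A p.1 p.2‖) * ‖x‖ := by
        rw [Finset.sum_mul, Fintype.sum_prod_type]

lemma sum_pow_le_aux (x : ℝ) (hx : 0 ≤ x) (m : ℕ) (hm : 1 ≤ m) :
    ∑ j ∈ Finset.range m, x ^ j ≤ (1 + x) ^ (m - 1) := by
  obtain ⟨m', rfl⟩ : ∃ m', m = m' + 1 := ⟨m - 1, (Nat.succ_pred_eq_of_pos hm).symm⟩
  simp only [Nat.add_sub_cancel]
  rw [show (1:ℝ) + x = x + 1 from add_comm 1 x, add_pow]
  simp only [one_pow, mul_one]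
  apply Finset.sum_le_sum
  intro j hj
  have hjle : j ≤ m' := Nat.lt_succ_iff.mp (Finset.mem_range.mp hj)
  have h1 : (1:ℝ) ≤ (m'.choose j : ℝ) := by
    exact_mod_cast Nat.succ_le_of_lt (Nat.choose_pos hjle)
  calc x ^ j = x ^ j * 1 := (mul_one _).symm
    _ ≤ x ^ j * (m'.choose j : ℝ) := by
        apply mul_le_mul_of_nonneg_left h1 (pow_nonneg hx j)

lemma matrix_one_norm {m : ℕ} (hm : 1 ≤ m) : ‖(1 : Matrix (Fin m) (Fin m) ℂ)‖ = 1 := by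
  haveI : Nontrivial (EuclideanSpace ℂ (Fin m)) := by
    refine ⟨0, EuclideanSpace.single ⟨0, hm⟩ 1, fun h => ?_⟩
    simpa [EuclideanSpace.single_apply] using congrArg (fun v => v ⟨0, hm⟩) h
  rw [Matrix.cstar_norm_def, map_one]
  exact ContinuousLinearMap.norm_id

lemma matrix_pow_norm_le {m : ℕ} (hm : 1 ≤ m) (B : Matrix (Fin m) (Fin m) ℂ) (k : ℕ) :
    ‖B ^ k‖ ≤ ‖B‖ ^ k := by
  induction k with
  | zero => simp [matrix_one_norm hm]
  | succ k ih =>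
    rw [pow_succ, pow_succ]
    exact (norm_mul_le _ _).trans (mul_le_mul_of_nonneg_right ih (norm_nonneg _))

lemma exp_smul_norm_bound {m : ℕ} (hm : 1 ≤ m) (A : Matrix (Fin m) (Fin m) ℂ)
    (R : ℝ) (hR : 0 ≤ R) (hspec : ∀ lam ∈ spectrum ℂ A, |lam.re| ≤ R) (t : ℝ) :
    ‖NormedSpace.exp (t • A)‖ ≤ Real.exp (R * |t|) * (1 + 2 * |t| * ‖A‖) ^ (m - 1) := by
  have hone : ‖(1 : Matrix (Fin m) (Fin m) ℂ)‖ = 1 := matrix_one_norm hm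
  haveI hnoc : NormOneClass (Matrix (Fin m) (Fin m) ℂ) := ⟨hone⟩
  set l := A.charpoly.roots.toList with hl
  have hsplits : A.charpoly.Splits := IsAlgClosed.splits _
  have hcard : A.charpoly.roots.card = m := by
    rw [(Polynomial.splits_iff_card_roots).mp hsplits, Matrix.charpoly_natDegree_eq_dim,
      Fintype.card_fin]
  have hlen : l.length = m := by rw [hl, Multiset.length_toList, hcard]
  set μ : ℕ → ℂ := fun j => l.getD j 0 with hμ
  have hmem : ∀ j, j < m → μ j ∈ spectrum ℂ A := by
    intro j hj
    have hj' : j < l.length := by omega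
    have hmem' : μ j ∈ l := by
      rw [hμ]
      simp only
      rw [List.getD_eq_getElem l 0 hj']
      exact List.getElem_mem _
    have hroot : μ j ∈ A.charpoly.roots := by rwa [← Multiset.mem_toList]
    exact root_charpoly_mem_spectrum A _ (Polynomial.isRoot_of_mem_roots hroot)
  have hcp : A.charpoly = (l.map fun a : ℂ => Polynomial.X - Polynomial.C a).prod := by
    have h1 := hsplits.eq_prod_roots_of_monic (Matrix.charpoly_monic A)
    rw [h1]
    conv_lhs => rw [← Multiset.coe_toList A.charpoly.roots]
    rw [Multiset.map_coe, Multiset.prod_coe]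
  have htake : ∀ j, j ≤ m → putzerP A μ j = ((l.take j).map (fun z => A - z • 1)).prod := by
    intro j
    induction j with
    | zero => intro _; simp [putzerP]
    | succ j ih =>
      intro hjm
      have hj' : j < l.length := by omega
      rw [show putzerP A μ (j+1) = putzerP A μ j * (A - μ j • 1) from rfl, ih (by omega),
        List.take_succ]
      rw [List.getElem?_eq_getElem hj']
      rw [List.map_append, List.prod_append]
      have : μ j = l[j] := List.getD_eq_getElem l 0 hj'
      simp [this]
  have hP : putzerP A μ m = 0 := by
    have h0 : Polynomial.aeval A A.charpoly = 0 := Matrix.aeval_self_charpoly A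
    rw [hcp, map_list_prod (Polynomial.aeval A), List.map_map] at h0
    have htl : l.take m = l := by rw [← hlen]; exact List.take_length
    rw [htake m le_rfl, htl, ← h0]
    congr 1
    apply List.map_congr_left
    intro z _
    simp [Function.comp, map_sub, Polynomial.aeval_X, Polynomial.aeval_C,
      Algebra.algebraMap_eq_smul_one]
  have hμnorm : ∀ j, j < m → ‖μ j‖ ≤ ‖A‖ := fun j hj =>
    spectrum.norm_le_norm_of_mem (hmem j hj)
  have hPnorm : ∀ j, j ≤ m → ‖putzerP A μ j‖ ≤ (2 * ‖A‖) ^ j := by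
    intro j
    induction j with
    | zero => intro _; simp [putzerP, hone]
    | succ j ih =>
      intro hj
      have hAnn : (0:ℝ) ≤ 2 * ‖A‖ := by positivity
      calc ‖putzerP A μ (j+1)‖ = ‖putzerP A μ j * (A - μ j • 1)‖ := rfl
        _ ≤ ‖putzerP A μ j‖ * ‖A - μ j • 1‖ := norm_mul_le _ _
        _ ≤ (2 * ‖A‖) ^ j * (2 * ‖A‖) := by
            apply mul_le_mul (ih (by omega)) ?_ (norm_nonneg _) (pow_nonneg hAnn j)
            calc ‖A - μ j • 1‖ ≤ ‖A‖ + ‖μ j • (1 : Matrix (Fin m) (Fin m) ℂ)‖ := norm_sub_le _ _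
              _ = ‖A‖ + ‖μ j‖ := by
                  rw [norm_smul, hone, mul_one]
              _ ≤ ‖A‖ + ‖A‖ := by gcongr; exact hμnorm j (by omega)
              _ = 2 * ‖A‖ := by ring
        _ = (2 * ‖A‖) ^ (j+1) := (pow_succ _ _).symm
  rw [putzer_exp_eq hm A μ hP t]
  calc ‖∑ j ∈ Finset.range m, putzerR μ j t • putzerP A μ j‖
      ≤ ∑ j ∈ Finset.range m, ‖putzerR μ j t • putzerP A μ j‖ := norm_sum_le _ _
    _ ≤ ∑ j ∈ Finset.range m, (Real.exp (R * |t|) * |t| ^ j) * (2 * ‖A‖) ^ j := by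
        apply Finset.sum_le_sum
        intro j hj
        have hjm : j < m := Finset.mem_range.mp hj
        rw [norm_smul]
        apply mul_le_mul ?_ (hPnorm j hjm.le) (norm_nonneg _) ?_
        · exact putzerR_bound μ R hR j (fun i hi => hspec _ (hmem i (lt_of_le_of_lt hi hjm))) t
        · positivity
    _ = Real.exp (R * |t|) * ∑ j ∈ Finset.range m, (2 * |t| * ‖A‖) ^ j := by
        rw [Finset.mul_sum]
        apply Finset.sum_congr rfl
        intro j _
        ring
    _ ≤ Real.exp (R * |t|) * (1 + 2 * |t| * ‖A‖) ^ (m - 1) := by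
        apply mul_le_mul_of_nonneg_left ?_ (Real.exp_pos _).le
        exact sum_pow_le_aux _ (by positivity) m hm

lemma mv_eval_abs_le {n : ℕ} (p : MvPolynomial (Fin n) ℂ) (z : Fin n → ℂ) (B : ℝ) (hB : 1 ≤ B)
    (hz : ∀ j, ‖z j‖ ≤ B) (d : ℕ) (hdeg : p.totalDegree ≤ d) :
    ‖MvPolynomial.eval z p‖
      ≤ (∑ s ∈ p.support, ‖MvPolynomial.coeff s p‖) * B ^ d := by
  rw [MvPolynomial.eval_eq']
  calc ‖∑ s ∈ p.support, MvPolynomial.coeff s p * ∏ i, z i ^ s i‖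
      ≤ ∑ s ∈ p.support, ‖MvPolynomial.coeff s p * ∏ i, z i ^ s i‖ :=
        norm_sum_le _ _
    _ ≤ ∑ s ∈ p.support, ‖MvPolynomial.coeff s p‖ * B ^ d := by
        apply Finset.sum_le_sum
        intro s hs
        rw [norm_mul]
        apply mul_le_mul_of_nonneg_left ?_ (norm_nonneg _)
        have hBd : (0:ℝ) ≤ B := le_trans zero_le_one hB
        calc ‖∏ i, z i ^ s i‖ = ∏ i, ‖z i‖ ^ s i := by
              rw [norm_prod]
              exact Finset.prod_congr rfl fun i _ => norm_pow _ _
          _ ≤ ∏ i, B ^ s i := by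
              apply Finset.prod_le_prod (fun i _ => pow_nonneg (norm_nonneg _) _)
              exact fun i _ => pow_le_pow_left₀ (norm_nonneg _) (hz i) _
          _ = B ^ (∑ i, s i) := Finset.prod_pow_eq_pow_sum _ _ _
          _ ≤ B ^ d := by
              apply pow_le_pow_right₀ hB
              refine le_trans ?_ (le_trans (MvPolynomial.le_totalDegree hs) hdeg)
              rw [Finsupp.sum_fintype]
              exact fun _ => rfl
    _ = (∑ s ∈ p.support, ‖MvPolynomial.coeff s p‖) * B ^ d := by
        rw [Finset.sum_mul]


/-- Evaluation of a matrix of multivariate polynomials at a point of `ℂⁿ`. -/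
noncomputable def polyMatEval {m n : ℕ}
    (𝒢 : Matrix (Fin m) (Fin m) (MvPolynomial (Fin n) ℂ)) (ζ : Fin n → ℂ) :
    Matrix (Fin m) (Fin m) ℂ :=
  𝒢.map (MvPolynomial.eval ζ)

/-- The componentwise imaginary part of `ζ ∈ ℂⁿ`, regarded as a vector of `ℝⁿ`
with Euclidean norm. -/
noncomputable def imVec {n : ℕ} (ζ : EuclideanSpace ℂ (Fin n)) :
    EuclideanSpace ℝ (Fin n) :=
  WithLp.toLp 2 (fun j => (ζ j).im)

/-- The estimate (7.4) of Section 7: if `max |Re σ(𝒢(iζ))| ≤ C(1+|Im ζ|)` for all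
`ζ ∈ ℂⁿ`, then
for every `k ∈ ℕ`,
`‖𝒢(iζ)^k exp(t𝒢(iζ))‖ ≤ e^{C|t|}(1+2|t|)^{m-1} D_k (1+|ζ|)^{(m+k-1)d} e^{C|t||Im ζ|}`,
where `d` is the maximal total degree of the entries of `𝒢`. -/
theorem exp_pow_estimate_of_ehrenpreis (m n : ℕ) (hm : 1 ≤ m) (hn : 1 ≤ n)
    (𝒢 : Matrix (Fin m) (Fin m) (MvPolynomial (Fin n) ℂ)) (d : ℕ)
    (hd : d = Finset.univ.sup (fun p : Fin m × Fin m => (𝒢 p.1 p.2).totalDegree))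
    (C : ℝ) (hC : 0 < C)
    (hspec : ∀ ζ : EuclideanSpace ℂ (Fin n),
      ∀ lam ∈ spectrum ℂ (polyMatEval 𝒢 (fun j => Complex.I * ζ j)),
        |lam.re| ≤ C * (1 + ‖imVec ζ‖)) :
    ∀ k : ℕ, ∃ D : ℝ, 0 < D ∧ ∀ (t : ℝ) (ζ : EuclideanSpace ℂ (Fin n)),
      ‖polyMatEval 𝒢 (fun j => Complex.I * ζ j) ^ k *
          NormedSpace.exp (t • polyMatEval 𝒢 (fun j => Complex.I * ζ j))‖ ≤
        Real.exp (C * |t|) * (1 + 2 * |t|) ^ (m - 1) * D * (1 + ‖ζ‖) ^ ((m + k - 1) * d) *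
          Real.exp (C * |t| * ‖imVec ζ‖) := by
  intro k
  set c : ℝ := ∑ p : Fin m × Fin m, ∑ s ∈ (𝒢 p.1 p.2).support,
    ‖MvPolynomial.coeff s (𝒢 p.1 p.2)‖ with hc
  have hc0 : 0 ≤ c :=
    Finset.sum_nonneg fun p _ => Finset.sum_nonneg fun s _ => norm_nonneg _
  set M : ℝ := c + 1 with hM
  have hM1 : 1 ≤ M := by rw [hM]; linarith
  have hM0 : 0 < M := by linarith
  have hA : ∀ ζ : EuclideanSpace ℂ (Fin n),
      ‖polyMatEval 𝒢 (fun j => Complex.I * ζ j)‖ ≤ M * (1 + ‖ζ‖) ^ d := by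
    intro ζ
    have hB : (1:ℝ) ≤ 1 + ‖ζ‖ := by linarith [norm_nonneg ζ]
    have hz : ∀ j, ‖Complex.I * ζ j‖ ≤ 1 + ‖ζ‖ := by
      intro j
      rw [norm_mul, Complex.norm_I, one_mul]
      calc ‖ζ j‖ ≤ ‖ζ‖ := coord_abs_le_norm ζ j
        _ ≤ 1 + ‖ζ‖ := by linarith
    calc ‖polyMatEval 𝒢 (fun j => Complex.I * ζ j)‖
        ≤ ∑ p : Fin m × Fin m,
            ‖polyMatEval 𝒢 (fun j => Complex.I * ζ j) p.1 p.2‖ :=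
          l2_opNorm_le_sum_abs _
      _ ≤ ∑ p : Fin m × Fin m, (∑ s ∈ (𝒢 p.1 p.2).support,
            ‖MvPolynomial.coeff s (𝒢 p.1 p.2)‖) * (1 + ‖ζ‖) ^ d := by
          apply Finset.sum_le_sum
          intro p _
          have : polyMatEval 𝒢 (fun j => Complex.I * ζ j) p.1 p.2
              = MvPolynomial.eval (fun j => Complex.I * ζ j) (𝒢 p.1 p.2) := rfl
          rw [this]
          apply mv_eval_abs_le _ _ _ hB hz d
          rw [hd]
          exact Finset.le_sup (f := fun p : Fin m × Fin m => (𝒢 p.1 p.2).totalDegree)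
            (Finset.mem_univ p)
      _ = c * (1 + ‖ζ‖) ^ d := by rw [hc, Finset.sum_mul]
      _ ≤ M * (1 + ‖ζ‖) ^ d := by
          apply mul_le_mul_of_nonneg_right (by linarith) (by positivity)
  refine ⟨M ^ k * (1 + M) ^ (m - 1), by positivity, ?_⟩
  intro t ζ
  set A := polyMatEval 𝒢 (fun j => Complex.I * ζ j) with hAdef
  set R : ℝ := C * (1 + ‖imVec ζ‖) with hRdef
  have hR : 0 ≤ R := by
    apply mul_nonneg hC.le
    linarith [norm_nonneg (imVec ζ)]
  have hexp := exp_smul_norm_bound hm A R hR (hspec ζ) t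
  set X : ℝ := 1 + ‖ζ‖ with hX
  have hX1 : (1:ℝ) ≤ X := by rw [hX]; linarith [norm_nonneg ζ]
  have hXd : (1:ℝ) ≤ X ^ d := one_le_pow₀ hX1
  have hfac : 1 + 2 * |t| * ‖A‖ ≤ (1 + 2 * |t|) * ((1 + M) * X ^ d) := by
    have h2 : ‖A‖ ≤ M * X ^ d := hA ζ
    have ht0 : (0:ℝ) ≤ |t| := abs_nonneg t
    nlinarith [norm_nonneg A, mul_le_mul_of_nonneg_left h2 (mul_nonneg (by norm_num : (0:ℝ) ≤ 2) ht0)]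
  calc ‖A ^ k * NormedSpace.exp (t • A)‖
      ≤ ‖A ^ k‖ * ‖NormedSpace.exp (t • A)‖ := norm_mul_le _ _
    _ ≤ ‖A‖ ^ k * (Real.exp (R * |t|) * (1 + 2 * |t| * ‖A‖) ^ (m - 1)) := by
        apply mul_le_mul (matrix_pow_norm_le hm A k) hexp (norm_nonneg _)
          (pow_nonneg (norm_nonneg _) k)
    _ ≤ (M * X ^ d) ^ k * (Real.exp (R * |t|) * ((1 + 2 * |t|) * ((1 + M) * X ^ d)) ^ (m - 1)) := by
        apply mul_le_mul (pow_le_pow_left₀ (norm_nonneg _) (hA ζ) k) ?_ (by positivity) (by positivity)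
        apply mul_le_mul_of_nonneg_left ?_ (Real.exp_pos _).le
        apply pow_le_pow_left₀ (by positivity) hfac
    _ = Real.exp (C * |t|) * (1 + 2 * |t|) ^ (m - 1) * (M ^ k * (1 + M) ^ (m - 1)) *
          X ^ ((m + k - 1) * d) * Real.exp (C * |t| * ‖imVec ζ‖) := by
        rw [show R * |t| = C * |t| + C * |t| * ‖imVec ζ‖ from by rw [hRdef]; ring, Real.exp_add]
        rw [mul_pow M (X ^ d) k, mul_pow (1 + 2 * |t|) ((1 + M) * X ^ d) (m - 1),
          mul_pow (1 + M) (X ^ d) (m - 1), ← pow_mul X d k, ← pow_mul X d (m - 1),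
          show (m + k - 1) * d = d * k + d * (m - 1) from by
            rw [show m + k - 1 = k + (m - 1) from by omega]; ring,
          pow_add]
        ring
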